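/- For every v₁ ∈ {1,…,V} and every physical node n ∈ {1,…,N}, the conditionally optimal cost satisfies the Bellman recurrence: J*(v₁ | n) equals the minimum, over v_s ∈ {1,…,v₁} and (when v_s > 1) over m ∈ {1,…,n−1}, of max( J*(v_s − 1 | m) ; max over resource types k of Σ_{v = v_s}^{v₁} d(v,n,k) ; c(v_s, m, n) ; max over v_s + 1 ≤ v ≤ v₁ of c(v,n,n) ), where for v_s = 1 the terms J*(v_s − 1 | m) and c(v_s, m, n) are omitted (taken to be 0) and no minimization over m is performed, and a minimum over an empty set is +∞. -/

import Mathlib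

open scoped ENNReal BigOperators

/-- The cost `J_π(v₁)` of a placement `π` of application nodes `1,…,v₁` (of a linear
application graph) onto physical nodes `1,…,N`, with `K` resource types, node-placement
costs `d v n k` and pairwise costs `c v n₁ n₂` (cost of placing node `v-1` on `n₁` and
node `v` on `n₂`, for `2 ≤ v`). -/
noncomputable def lineCost (N K : ℕ) (d : ℕ → ℕ → ℕ → ℝ≥0∞) (c : ℕ → ℕ → ℕ → ℝ≥0∞)
    (v₁ : ℕ) (π : ℕ → ℕ) : ℝ≥0∞ :=
  max
    (⨆ k ∈ Finset.Icc 1 K, ⨆ n ∈ Finset.Icc 1 N,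
      ∑ v ∈ (Finset.Icc 1 v₁).filter (fun v => π v = n), d v n k)
    (⨆ v ∈ Finset.Icc 2 v₁, c v (π (v - 1)) (π v))

/-- The conditionally optimal cost `J*(v₁ | n)`: the infimum of `J_π(v₁)` over all
cycle-free (nondecreasing) placements `π : {1,…,v₁} → {1,…,N}` with `π v₁ = n`,
with the convention `J*(0 | n) = 0`.  (An infimum over an empty set is `+∞`.) -/
noncomputable def lineOpt (N K : ℕ) (d : ℕ → ℕ → ℕ → ℝ≥0∞) (c : ℕ → ℕ → ℕ → ℝ≥0∞)
    (v₁ n : ℕ) : ℝ≥0∞ :=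
  if v₁ = 0 then 0
  else
    ⨅ π ∈ {π : ℕ → ℕ |
        (∀ v ∈ Finset.Icc 1 v₁, π v ∈ Finset.Icc 1 N) ∧
        (∀ v w, 1 ≤ v → v ≤ w → w ≤ v₁ → π v ≤ π w) ∧
        π v₁ = n},
      lineCost N K d c v₁ π


lemma lineCost_zero (N K : ℕ) (d : ℕ → ℕ → ℕ → ℝ≥0∞) (c : ℕ → ℕ → ℕ → ℝ≥0∞) (π : ℕ → ℕ) :
    lineCost N K d c 0 π = 0 := by
  simp [lineCost]

lemma lineCost_congr (N K : ℕ) (d : ℕ → ℕ → ℕ → ℝ≥0∞) (c : ℕ → ℕ → ℕ → ℝ≥0∞)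
    (u : ℕ) (π π' : ℕ → ℕ) (h : ∀ v, 1 ≤ v → v ≤ u → π v = π' v) :
    lineCost N K d c u π = lineCost N K d c u π' := by
  unfold lineCost
  congr 1
  · refine iSup_congr fun k => iSup_congr fun _ => iSup_congr fun n => iSup_congr fun _ => ?_
    refine Finset.sum_congr ?_ fun _ _ => rfl
    ext v
    simp only [Finset.mem_filter, Finset.mem_Icc]
    constructor
    · rintro ⟨⟨h1, h2⟩, h3⟩; exact ⟨⟨h1, h2⟩, by rw [← h v h1 h2]; exact h3⟩
    · rintro ⟨⟨h1, h2⟩, h3⟩; exact ⟨⟨h1, h2⟩, by rw [h v h1 h2]; exact h3⟩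
  · refine iSup_congr fun v => iSup_congr fun hv => ?_
    simp only [Finset.mem_Icc] at hv
    rw [h v (by omega) hv.2, h (v-1) (by omega) (by omega)]

lemma lineCost_split (N K : ℕ) (d : ℕ → ℕ → ℕ → ℝ≥0∞) (c : ℕ → ℕ → ℕ → ℝ≥0∞)
    (v₁ n vs : ℕ) (π : ℕ → ℕ)
    (hn : n ∈ Finset.Icc 1 N) (h1 : 1 ≤ vs) (h2 : vs ≤ v₁)
    (htail : ∀ v, vs ≤ v → v ≤ v₁ → π v = n)
    (hhead : ∀ v, 1 ≤ v → v ≤ vs - 1 → π v ≠ n) :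
    lineCost N K d c v₁ π =
      max (lineCost N K d c (vs - 1) π)
        (max (⨆ k ∈ Finset.Icc 1 K, ∑ v ∈ Finset.Icc vs v₁, d v n k)
          (max (if vs = 1 then 0 else c vs (π (vs - 1)) n)
            (⨆ v ∈ Finset.Icc (vs + 1) v₁, c v n n))) := by
  have hfn : (Finset.Icc 1 v₁).filter (fun v => π v = n) = Finset.Icc vs v₁ := by
    ext v
    simp only [Finset.mem_filter, Finset.mem_Icc]
    constructor
    · rintro ⟨⟨ha, hb⟩, hc⟩
      refine ⟨?_, hb⟩
      by_contra hlt
      exact hhead v ha (by omega) hc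
    · rintro ⟨ha, hb⟩
      exact ⟨⟨by omega, hb⟩, htail v ha hb⟩
  have hfm : ∀ n', n' ≠ n → (Finset.Icc 1 v₁).filter (fun v => π v = n')
      = (Finset.Icc 1 (vs - 1)).filter (fun v => π v = n') := by
    intro n' hne
    ext v
    simp only [Finset.mem_filter, Finset.mem_Icc]
    constructor
    · rintro ⟨⟨ha, hb⟩, hc⟩
      refine ⟨⟨ha, ?_⟩, hc⟩
      by_contra hlt
      exact hne (hc ▸ (htail v (by omega) hb).symm ▸ rfl)
    · rintro ⟨⟨ha, hb⟩, hc⟩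
      exact ⟨⟨ha, by omega⟩, hc⟩
  unfold lineCost
  apply le_antisymm
  · apply max_le
    · refine iSup₂_le fun k hk => iSup₂_le fun n' hn' => ?_
      by_cases hcase : n' = n
      · subst hcase
        rw [hfn]
        exact le_max_of_le_right (le_max_of_le_left (le_iSup₂ (f := fun k _ => ∑ v ∈ Finset.Icc vs v₁, d v n' k) k hk))
      · rw [hfm n' hcase]
        refine le_max_of_le_left (le_max_of_le_left ?_)
        exact le_iSup₂_of_le k hk (le_iSup₂ (f := fun n'' _ => ∑ v ∈ (Finset.Icc 1 (vs-1)).filter (fun v => π v = n''), d v n'' k) n' hn')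
    · refine iSup₂_le fun v hv => ?_
      simp only [Finset.mem_Icc] at hv
      rcases lt_trichotomy v vs with hlt | heq | hgt
      · refine le_max_of_le_left (le_max_of_le_right ?_)
        exact le_iSup₂ (f := fun v _ => c v (π (v-1)) (π v)) v (Finset.mem_Icc.mpr ⟨hv.1, by omega⟩)
      · subst heq
        rw [htail v le_rfl hv.2]
        refine le_max_of_le_right (le_max_of_le_right (le_max_of_le_left ?_))
        rw [if_neg (by omega)]
      · refine le_max_of_le_right (le_max_of_le_right (le_max_of_le_right ?_))
        rw [htail v (by omega) hv.2, htail (v-1) (by omega) (by omega)]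
        exact le_iSup₂ (f := fun v _ => c v n n) v (Finset.mem_Icc.mpr ⟨by omega, hv.2⟩)
  · apply max_le
    · -- lineCost (vs-1) π ≤ lineCost v₁ π
      apply max_le
      · refine iSup₂_le fun k hk => iSup₂_le fun n' hn' => ?_
        refine le_max_of_le_left ?_
        refine le_iSup₂_of_le k hk (le_iSup₂_of_le n' hn' ?_)
        refine Finset.sum_le_sum_of_subset ?_
        exact Finset.filter_subset_filter _ (Finset.Icc_subset_Icc_right (by omega))
      · refine iSup₂_le fun v hv => ?_
        simp only [Finset.mem_Icc] at hv
        refine le_max_of_le_right ?_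
        exact le_iSup₂ (f := fun v _ => c v (π (v-1)) (π v)) v (Finset.mem_Icc.mpr ⟨hv.1, by omega⟩)
    · apply max_le
      · refine iSup₂_le fun k hk => ?_
        refine le_max_of_le_left ?_
        refine le_iSup₂_of_le k hk (le_iSup₂_of_le n hn ?_)
        rw [hfn]
      · apply max_le
        · split_ifs with hvs1
          · exact zero_le
          · refine le_max_of_le_right ?_
            rw [← htail vs le_rfl h2]
            exact le_iSup₂ (f := fun v _ => c v (π (v-1)) (π v)) vs (Finset.mem_Icc.mpr ⟨by omega, h2⟩)
        · refine iSup₂_le fun v hv => ?_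
          simp only [Finset.mem_Icc] at hv
          refine le_max_of_le_right ?_
          have e : c v n n = c v (π (v-1)) (π v) := by
            rw [htail (v-1) (by omega) (by omega), htail v (by omega) hv.2]
          rw [e]
          exact le_iSup₂ (f := fun v _ => c v (π (v-1)) (π v)) v (Finset.mem_Icc.mpr ⟨by omega, hv.2⟩)

theorem lineOpt_bellman (V N K : ℕ) (d : ℕ → ℕ → ℕ → ℝ≥0∞) (c : ℕ → ℕ → ℕ → ℝ≥0∞)
    (v₁ n : ℕ) (hv : v₁ ∈ Finset.Icc 1 V) (hn : n ∈ Finset.Icc 1 N) :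
    lineOpt N K d c v₁ n =
      ⨅ vs ∈ Finset.Icc 1 v₁,
        if vs = 1 then
          max (⨆ k ∈ Finset.Icc 1 K, ∑ v ∈ Finset.Icc vs v₁, d v n k)
              (⨆ v ∈ Finset.Icc (vs + 1) v₁, c v n n)
        else
          ⨅ m ∈ Finset.Icc 1 (n - 1),
            max (lineOpt N K d c (vs - 1) m)
              (max (⨆ k ∈ Finset.Icc 1 K, ∑ v ∈ Finset.Icc vs v₁, d v n k)
                (max (c vs m n)
                  (⨆ v ∈ Finset.Icc (vs + 1) v₁, c v n n))) := by
  classical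
  have hnmem := hn
  simp only [Finset.mem_Icc] at hv hn
  obtain ⟨hv1, hvV⟩ := hv
  obtain ⟨hn1, hnN⟩ := hn
  have hv0 : v₁ ≠ 0 := by omega
  apply le_antisymm
  · refine le_iInf₂ fun vs hvs => ?_
    simp only [Finset.mem_Icc] at hvs
    split_ifs with hvs1
    · -- vs = 1
      subst hvs1
      rw [lineOpt, if_neg hv0]
      refine iInf₂_le_of_le (fun _ => n) ⟨fun v _ => hnmem, fun _ _ _ _ _ => le_rfl, rfl⟩ ?_
      rw [lineCost_split N K d c v₁ n 1 (fun _ => n) hnmem le_rfl hv1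
        (fun _ _ _ => rfl) (fun v h1 h2 => absurd h2 (by omega))]
      rw [lineCost_zero, if_pos rfl]
      exact max_le zero_le
        (max_le (le_max_left _ _) (max_le zero_le (le_max_right _ _)))
    · -- vs ≥ 2
      refine le_iInf₂ fun m hm => ?_
      simp only [Finset.mem_Icc] at hm
      have hvs2 : 2 ≤ vs := by omega
      have key : ∀ (S : Set (ℕ → ℕ)) (f : (ℕ → ℕ) → ℝ≥0∞) (R : ℝ≥0∞),
          max (⨅ π ∈ S, f π) R = ⨅ π ∈ S, max (f π) R := by
        intro S f R
        simp only [iInf_sup_eq]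
      conv_rhs => rw [lineOpt, if_neg (by omega : (vs - 1) ≠ 0)]
      rw [key]
      refine le_iInf₂ fun π' hπ' => ?_
      obtain ⟨hr', hmono', hend'⟩ := hπ'
      rw [lineOpt, if_neg hv0]
      have hπvsm1 : (if vs - 1 < vs then π' (vs - 1) else n) = m := by
        rw [if_pos (by omega), hend']
      refine iInf₂_le_of_le (fun v => if v < vs then π' v else n) ⟨?_, ?_, ?_⟩ ?_
      · intro v hvmem
        simp only [Finset.mem_Icc] at hvmem
        by_cases h : v < vs
        · simpa only [if_pos h] using hr' v (Finset.mem_Icc.mpr ⟨hvmem.1, by omega⟩)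
        · simpa only [if_neg h] using hnmem
      · intro v w h1 h2 h3
        by_cases hv' : v < vs <;> by_cases hw' : w < vs
        · simp only [if_pos hv', if_pos hw']
          exact hmono' v w h1 h2 (by omega)
        · simp only [if_pos hv', if_neg hw']
          calc π' v ≤ π' (vs - 1) := hmono' v (vs - 1) h1 (by omega) le_rfl
            _ = m := hend'
            _ ≤ n := by omega
        · omega
        · simp only [if_neg hv', if_neg hw', le_refl]
      · simp only [if_neg (by omega : ¬ v₁ < vs)]
      · rw [lineCost_split N K d c v₁ n vs _ hnmem (by omega) hvs.2
          (fun v h1 h2 => by simp only [if_neg (by omega : ¬ v < vs)])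
          (fun v h1 h2 => by
            simp only [if_pos (by omega : v < vs)]
            have : π' v ≤ π' (vs - 1) := hmono' v (vs - 1) h1 (by omega) le_rfl
            rw [hend'] at this
            omega)]
        rw [if_neg hvs1, hπvsm1]
        rw [lineCost_congr N K d c (vs - 1) _ π'
          (fun v hv1' hv2' => by simp only [if_pos (by omega : v < vs)])]
  · rw [lineOpt, if_neg hv0]
    refine le_iInf₂ fun π hπ => ?_
    obtain ⟨hr, hmono, hend⟩ := hπ
    have hex : ∃ v, 1 ≤ v ∧ v ≤ v₁ ∧ π v = n := ⟨v₁, hv1, le_rfl, hend⟩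
    set vs := Nat.find hex with hvsdef
    obtain ⟨hvs1, hvsv, hπvs⟩ := Nat.find_spec hex
    rw [← hvsdef] at hvs1 hvsv hπvs
    have hmin : ∀ v, v < vs → ¬(1 ≤ v ∧ v ≤ v₁ ∧ π v = n) := fun v h => Nat.find_min hex h
    have htail : ∀ v, vs ≤ v → v ≤ v₁ → π v = n := by
      intro v h1 h2
      have ha : π v ≤ π v₁ := hmono v v₁ (by omega) h2 le_rfl
      have hb : π vs ≤ π v := hmono vs v hvs1 h1 h2
      rw [hend] at ha
      rw [hπvs] at hb
      omega
    have hhead : ∀ v, 1 ≤ v → v ≤ vs - 1 → π v ≠ n := by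
      intro v h1 h2 h3
      exact hmin v (by omega) ⟨h1, by omega, h3⟩
    refine iInf₂_le_of_le vs (Finset.mem_Icc.mpr ⟨hvs1, hvsv⟩) ?_
    rw [lineCost_split N K d c v₁ n vs π hnmem hvs1 hvsv htail hhead]
    split_ifs with h1case
    · exact sup_le (le_sup_of_le_right le_sup_left)
        (le_sup_of_le_right (le_sup_of_le_right le_sup_right))
    · have hm1 : 1 ≤ π (vs - 1) := by
        have := hr (vs - 1) (Finset.mem_Icc.mpr ⟨by omega, by omega⟩)
        simp only [Finset.mem_Icc] at this
        exact this.1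
      have hmn : π (vs - 1) < n := by
        have h1 : π (vs - 1) ≤ π vs := hmono (vs - 1) vs (by omega) (by omega) hvsv
        have h2 : π (vs - 1) ≠ n := hhead (vs - 1) (by omega) le_rfl
        omega
      refine iInf₂_le_of_le (π (vs - 1)) (Finset.mem_Icc.mpr ⟨hm1, by omega⟩) ?_
      refine max_le_max ?_ le_rfl
      rw [lineOpt, if_neg (by omega : (vs - 1) ≠ 0)]
      exact iInf₂_le π ⟨fun v hvmem => by
          simp only [Finset.mem_Icc] at hvmem
          exact hr v (Finset.mem_Icc.mpr ⟨hvmem.1, by omega⟩),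
        fun v w a b c' => hmono v w a b (by omega), rfl⟩
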